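/- Let a < b be real numbers and let f : [a,b] → ℝ be continuous and convex. Then for every x ∈ (a,b), (1/(b−a))·∫_a^b f(t) dt − f((a+b)/2) ≥ ((x−a)/(b−a))·( (1/(x−a))·∫_a^x f(t) dt − f((a+x)/2) ) ≥ 0. -/

import Mathlib

open MeasureTheory intervalIntegral

/-- Left Hermite–Hadamard inequality. -/
lemma hh_left (c d : ℝ) (hcd : c < d) (f : ℝ → ℝ)
    (hc : ContinuousOn f (Set.Icc c d)) (hv : ConvexOn ℝ (Set.Icc c d) f) :
    (d - c) * f ((c + d) / 2) ≤ ∫ t in c..d, f t := by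
  have hint : IntervalIntegrable f volume c d :=
    hc.intervalIntegrable_of_Icc hcd.le
  have hmaps : Set.MapsTo (fun t => c + d - t) (Set.Icc c d) (Set.Icc c d) := by
    intro t ht
    obtain ⟨h1, h2⟩ := ht
    exact ⟨by simp; linarith, by simp; linarith⟩
  have hc2 : ContinuousOn (fun t => f (c + d - t)) (Set.Icc c d) :=
    hc.comp (by fun_prop) hmaps
  have hint2 : IntervalIntegrable (fun t => f (c + d - t)) volume c d :=
    hc2.intervalIntegrable_of_Icc hcd.le
  have hrefl : (∫ t in c..d, f (c + d - t)) = ∫ t in c..d, f t := by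
    rw [intervalIntegral.integral_comp_sub_left f (c + d)]
    norm_num
  have key : ∀ t ∈ Set.Icc c d, 2 * f ((c + d) / 2) ≤ f t + f (c + d - t) := by
    intro t ht
    have ht2 : c + d - t ∈ Set.Icc c d := hmaps ht
    have := hv.2 ht ht2 (by norm_num : (0:ℝ) ≤ 1/2) (by norm_num : (0:ℝ) ≤ 1/2)
      (by norm_num)
    simp only [smul_eq_mul] at this
    have heq : (1/2 : ℝ) * t + 1/2 * (c + d - t) = (c + d) / 2 := by ring
    rw [heq] at this
    try linarith
  have hmono : (∫ t in c..d, 2 * f ((c + d) / 2)) ≤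
      ∫ t in c..d, (f t + f (c + d - t)) :=
    intervalIntegral.integral_mono_on hcd.le (intervalIntegrable_const)
      (hint.add hint2) key
  rw [intervalIntegral.integral_const, intervalIntegral.integral_add hint hint2,
    hrefl, smul_eq_mul] at hmono
  linarith

theorem fejer_stmt_11 (a b : ℝ) (hab : a < b) (f : ℝ → ℝ)
    (hf_cont : ContinuousOn f (Set.Icc a b))
    (hf_conv : ConvexOn ℝ (Set.Icc a b) f)
    (x : ℝ) (hx : x ∈ Set.Ioo a b) :
    (x - a) / (b - a) * ((1 / (x - a)) * (∫ t in a..x, f t) - f ((a + x) / 2))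
        ≤ (1 / (b - a)) * (∫ t in a..b, f t) - f ((a + b) / 2) ∧
    0 ≤ (x - a) / (b - a) * ((1 / (x - a)) * (∫ t in a..x, f t) - f ((a + x) / 2)) := by
  obtain ⟨hax, hxb⟩ := hx
  have hba : (0:ℝ) < b - a := by linarith
  have hxa : (0:ℝ) < x - a := by linarith
  have hbx : (0:ℝ) < b - x := by linarith
  have hsub1 : Set.Icc a x ⊆ Set.Icc a b := Set.Icc_subset_Icc le_rfl hxb.le
  have hsub2 : Set.Icc x b ⊆ Set.Icc a b := Set.Icc_subset_Icc hax.le le_rfl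
  have h1 : (x - a) * f ((a + x) / 2) ≤ ∫ t in a..x, f t :=
    hh_left a x hax f (hf_cont.mono hsub1) (hf_conv.subset hsub1 (convex_Icc a x))
  have h2 : (b - x) * f ((x + b) / 2) ≤ ∫ t in x..b, f t :=
    hh_left x b hxb f (hf_cont.mono hsub2) (hf_conv.subset hsub2 (convex_Icc x b))
  -- convexity combination
  have hmP : (x + b) / 2 ∈ Set.Icc a b := ⟨by linarith, by linarith⟩
  have hmM : (a + x) / 2 ∈ Set.Icc a b := ⟨by linarith, by linarith⟩
  have hconv := hf_conv.2 hmP hmM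
    (le_of_lt (div_pos hbx hba)) (le_of_lt (div_pos hxa hba))
    (by field_simp; ring)
  simp only [smul_eq_mul] at hconv
  have heq : (b - x) / (b - a) * ((x + b) / 2) + (x - a) / (b - a) * ((a + x) / 2)
      = (a + b) / 2 := by field_simp; ring
  rw [heq] at hconv
  have h3 : (b - a) * f ((a + b) / 2)
      ≤ (b - x) * f ((x + b) / 2) + (x - a) * f ((a + x) / 2) := by
    have := mul_le_mul_of_nonneg_left hconv hba.le
    have e : (b - a) * ((b - x) / (b - a) * f ((x + b) / 2)
        + (x - a) / (b - a) * f ((a + x) / 2))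
        = (b - x) * f ((x + b) / 2) + (x - a) * f ((a + x) / 2) := by
      field_simp
    linarith [e ▸ this]
  have hintA : IntervalIntegrable f volume a x :=
    (hf_cont.mono hsub1).intervalIntegrable_of_Icc hax.le
  have hintB : IntervalIntegrable f volume x b :=
    (hf_cont.mono hsub2).intervalIntegrable_of_Icc hxb.le
  have hsplit : (∫ t in a..x, f t) + (∫ t in x..b, f t) = ∫ t in a..b, f t :=
    intervalIntegral.integral_add_adjacent_intervals hintA hintB
  set I1 := ∫ t in a..x, f t
  set I2 := ∫ t in x..b, f t
  have eL : (x - a) / (b - a) * ((1 / (x - a)) * I1 - f ((a + x) / 2))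
      = (I1 - (x - a) * f ((a + x) / 2)) / (b - a) := by
    field_simp
  have eR : (1 / (b - a)) * (∫ t in a..b, f t) - f ((a + b) / 2)
      = ((I1 + I2) - (b - a) * f ((a + b) / 2)) / (b - a) := by
    rw [← hsplit]; field_simp
  constructor
  · rw [eL, eR]
    have : I1 - (x - a) * f ((a + x) / 2) ≤ (I1 + I2) - (b - a) * f ((a + b) / 2) := by
      linarith
    gcongr
  · rw [eL]
    exact div_nonneg (by linarith) hba.le
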